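/- Let 𝒜 be a maximal almost-disjoint family on ω and S ⊆ ω ∪ 𝒜 a closed subset of the Mrówka space Ψ. If for every finite ℱ ⊆ S ∩ 𝒜 the set (S ∩ ω) \ ⋃ℱ is infinite, then the set ℬ = {A ∈ S ∩ 𝒜 : A ∩ S ∩ ω is infinite} is infinite. -/

import Mathlib

open Filter Topology Set

universe u v

/-- `x` has a neighbourhood base in the subspace `S` well-ordered by reverse inclusion. -/
def HasWONhdsBase {X : Type u} [TopologicalSpace X] (x : X) (S : Set X) : Prop :=
  ∃ (o : Ordinal.{u}) (B : ↥(Set.Iio o) → Set X),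
    (∀ i, B i ⊆ S) ∧ (∀ i j, i ≤ j → B j ⊆ B i) ∧
    (𝓝[S] x).HasBasis (fun _ => True) B

/-- `X` is radial at `x`. -/
def RadialAt (X : Type u) [TopologicalSpace X] (x : X) : Prop :=
  ∀ A : Set X, x ∈ closure A →
    ∃ (o : Ordinal.{u}) (f : ↥(Set.Iio o) → X), o ≠ 0 ∧
      (∀ i, f i ∈ A) ∧ Filter.Tendsto f Filter.atTop (𝓝 x)

/-- The underlying type of the Mrówka space of an almost-disjoint family on ℕ. -/
def Mrowka (𝒜 : Set (Set ℕ)) : Type := ℕ ⊕ ↥𝒜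

/-- The isolated points. -/
def Mrowka.nat {𝒜 : Set (Set ℕ)} (n : ℕ) : Mrowka 𝒜 := Sum.inl n

/-- The points corresponding to members of the family. -/
def Mrowka.pt {𝒜 : Set (Set ℕ)} (A : ↥𝒜) : Mrowka 𝒜 := Sum.inr A

/-- The Mrówka (Isbell–Mrówka, Ψ) topology: points of ℕ are isolated and each A ∈ 𝒜 has
neighbourhood base {A} ∪ (A \ F) for finite F. -/
instance (𝒜 : Set (Set ℕ)) : TopologicalSpace (Mrowka 𝒜) :=
  TopologicalSpace.generateFrom
    ({U : Set (Mrowka 𝒜) | ∃ n : ℕ, U = {Mrowka.nat n}} ∪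
     {U : Set (Mrowka 𝒜) | ∃ (A : ↥𝒜) (F : Set ℕ), F.Finite ∧
        U = {Mrowka.pt A} ∪ Mrowka.nat '' (A.1 \ F)})

/-- `𝒜` is a maximal almost-disjoint family of infinite subsets of ℕ. -/
def IsMad (𝒜 : Set (Set ℕ)) : Prop :=
  (∀ A ∈ 𝒜, A.Infinite) ∧ (∀ A ∈ 𝒜, ∀ B ∈ 𝒜, A ≠ B → (A ∩ B).Finite) ∧
  (∀ S : Set ℕ, S.Infinite → ∃ A ∈ 𝒜, (S ∩ A).Infinite)

lemma mrowka_key {𝒜 : Set (Set ℕ)} (A : ↥𝒜) (U : Set (Mrowka 𝒜)) (hU : IsOpen U)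
    (hA : Mrowka.pt A ∈ U) :
    ∃ F : Set ℕ, F.Finite ∧ Mrowka.nat '' ((A : Set ℕ) \ F) ⊆ U := by
  induction hU with
  | basic V hV =>
    rcases hV with ⟨n, rfl⟩ | ⟨A', F, hF, rfl⟩
    · exact absurd hA (fun h => Sum.inr_ne_inl (Set.mem_singleton_iff.1 h))
    · rcases hA with hA | ⟨m, _, hm⟩
      · obtain rfl : A' = A := Sum.inr.inj hA.symm
        exact ⟨F, hF, fun x hx => Or.inr hx⟩
      · exact absurd hm (by simp [Mrowka.nat, Mrowka.pt])
  | univ => exact ⟨∅, finite_empty, fun _ _ => trivial⟩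
  | inter V W _ _ ihV ihW =>
    obtain ⟨F1, hF1, hs1⟩ := ihV hA.1
    obtain ⟨F2, hF2, hs2⟩ := ihW hA.2
    refine ⟨F1 ∪ F2, hF1.union hF2, fun x hx => ?_⟩
    obtain ⟨m, hm, rfl⟩ := hx
    exact ⟨hs1 ⟨m, ⟨hm.1, fun h => hm.2 (Or.inl h)⟩, rfl⟩,
      hs2 ⟨m, ⟨hm.1, fun h => hm.2 (Or.inr h)⟩, rfl⟩⟩
  | sUnion s _ ih =>
    obtain ⟨V, hVs, hAV⟩ := hA
    obtain ⟨F, hF, hs⟩ := ih V hVs hAV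
    exact ⟨F, hF, fun x hx => ⟨V, hVs, hs hx⟩⟩

lemma mrowka_closed_pt {𝒜 : Set (Set ℕ)} (S : Set (Mrowka 𝒜)) (hS : IsClosed S)
    (A : ↥𝒜) (hinf : ((A : Set ℕ) ∩ {n : ℕ | Mrowka.nat n ∈ S}).Infinite) :
    Mrowka.pt A ∈ S := by
  rw [← hS.closure_eq]
  rw [mem_closure_iff]
  intro U hU hAU
  obtain ⟨F, hF, hs⟩ := mrowka_key A U hU hAU
  obtain ⟨n, hn1, hn2⟩ := ((hinf.diff hF).nonempty)
  exact ⟨Mrowka.nat n, hs ⟨n, ⟨hn1.1, hn2⟩, rfl⟩, hn1.2⟩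

theorem stmt11 (𝒜 : Set (Set ℕ)) (h : IsMad 𝒜) (S : Set (Mrowka 𝒜)) (hS : IsClosed S)
    (hfin : ∀ F : Set ↥𝒜, F.Finite → (∀ A ∈ F, Mrowka.pt A ∈ S) →
      ({n : ℕ | Mrowka.nat n ∈ S} \ ⋃ A ∈ F, (A : Set ℕ)).Infinite) :
    {A : ↥𝒜 | Mrowka.pt A ∈ S ∧
      ((A : Set ℕ) ∩ {n : ℕ | Mrowka.nat n ∈ S}).Infinite}.Infinite := by
  intro hBfin
  set ℬ := {A : ↥𝒜 | Mrowka.pt A ∈ S ∧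
      ((A : Set ℕ) ∩ {n : ℕ | Mrowka.nat n ∈ S}).Infinite} with hℬ
  have hT := hfin ℬ hBfin (fun A hA => hA.1)
  obtain ⟨A, hA𝒜, hAinf⟩ := h.2.2 _ hT
  have hAS : ((A : Set ℕ) ∩ {n : ℕ | Mrowka.nat n ∈ S}).Infinite := by
    apply hAinf.mono
    rintro n ⟨⟨hn1, _⟩, hn2⟩
    exact ⟨hn2, hn1⟩
  have hAB : (⟨A, hA𝒜⟩ : ↥𝒜) ∈ ℬ := ⟨mrowka_closed_pt S hS ⟨A, hA𝒜⟩ hAS, hAS⟩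
  obtain ⟨n, hn1, hn2⟩ := hAinf.nonempty
  exact hn1.2 (mem_iUnion₂.2 ⟨⟨A, hA𝒜⟩, hAB, hn2⟩)
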